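/- Let B be a Boolean algebra and a, b ∈ B such that ↓a ∪ ↑a' ⊆ ↓b ∪ ↑b', ↓b' ∪ ↑b ⊆ ↓a' ∪ ↑a, and a ≰ b. Then b = a', and neither a nor a' admits an element strictly between it and 0 on its side; in particular, if there exists c with 0 < c < a, a contradiction follows, so if a is not an atom and a ≠ 0 then a ≤ b. -/
import Mathlib

/-- Suppose `↓a ∪ ↑a' ⊆ ↓b ∪ ↑b'`, `↓b' ∪ ↑b ⊆ ↓a' ∪ ↑a`, and `a ≰ b` in a
Boolean algebra `B`.  Then `b = a'`, there is no element strictly between `⊥`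
and `a`; in particular the existence of `c` with `0 < c < a` yields a
contradiction, so if `a` is not an atom and `a ≠ 0` then `a ≤ b`. -/
theorem stmt6 {B : Type*} [BooleanAlgebra B] (a b : B)
    (h1 : {x : B | x ≤ a ∨ aᶜ ≤ x} ⊆ {x : B | x ≤ b ∨ bᶜ ≤ x})
    (h2 : {x : B | x ≤ bᶜ ∨ b ≤ x} ⊆ {x : B | x ≤ aᶜ ∨ a ≤ x})
    (hab : ¬ a ≤ b) :
    b = aᶜ ∧ (∀ c : B, ¬ (⊥ < c ∧ c < a)) ∧
      (¬ IsAtom a → a ≠ ⊥ → a ≤ b) := by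
  have hba : bᶜ ≤ a := by
    rcases h1 (Or.inl (le_refl a)) with h | h
    · exact absurd h hab
    · exact h
  have hbac : b ≤ aᶜ := by
    rcases h2 (Or.inr (le_refl b)) with h | h
    · exact h
    · exact absurd h hab
  have hb : b = aᶜ := le_antisymm hbac (by
    have := compl_le_compl hba
    simpa using this)
  have hmid : ∀ c : B, ¬ (⊥ < c ∧ c < a) := by
    intro c ⟨hc0, hca⟩
    rcases h1 (Or.inl hca.le) with h | h
    · rw [hb] at h
      have : c ≤ ⊥ := le_trans (le_inf hca.le h) (by simp)
      exact absurd this hc0.not_ge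
    · rw [hb, compl_compl] at h
      exact absurd h hca.not_ge
  refine ⟨hb, hmid, fun hna h0 => absurd ?_ hna⟩
  constructor
  · exact h0
  · intro c hc
    by_contra hc0
    exact hmid c ⟨bot_lt_iff_ne_bot.mpr hc0, hc⟩
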